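/- Let θ ∈ (0,π) and set s = Real.sqrt(sin(θ/2)), c = Real.sqrt(cos(θ/2)). The ℂ-linear span in ℂ¹⁶ of the set {ψ ⊗ (star∘ψ) : ψ : Fin 4 → ℂ with |ψ ℓ| = 1 for all ℓ} together with the three vectors ψ₁₄⊗φ₁₄, ψ₁₅⊗φ₁₅, ψ₁₆⊗φ₁₆, where (ψ₁₄,φ₁₄) = ((s,c,0,0),(c,s,0,0)), (ψ₁₅,φ₁₅) = ((0,s,c,0),(0,c,s,0)), (ψ₁₆,φ₁₆) = ((0,0,s,c),(0,0,c,s)), has dimension exactly 15. -/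

import Mathlib

open Matrix Complex Real

/-- The tensor (product) vector `x ⊗ y` in `ℂ¹⁶`. -/
noncomputable def tensorVec (x y : Fin 4 → ℂ) : Fin 4 × Fin 4 → ℂ :=
  fun p => x p.1 * y p.2

/-- The expectation `⟨v, W v⟩ = ∑ i, conj (v i) * (W *ᵥ v) i`. -/
noncomputable def expec (W : Matrix (Fin 4 × Fin 4) (Fin 4 × Fin 4) ℂ)
    (v : Fin 4 × Fin 4 → ℂ) : ℂ :=
  ∑ i, star (v i) * W.mulVec v i

/-- The Bell-diagonal matrix `W[a,b,c,d]` with `(α₀,α₁,α₂,α₃) = (a,b,c,d)`: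
`W((k,m),(k',m')) = α_{(m−k) mod 4}` if `k=k', m=m'`; `−1` if `k=m, k'=m', k≠k'`;
`0` otherwise. -/
noncomputable def Wabcd (a b c d : ℝ) : Matrix (Fin 4 × Fin 4) (Fin 4 × Fin 4) ℂ :=
  fun p q =>
    if p.1 = q.1 ∧ p.2 = q.2 then ((![a, b, c, d] (p.2 - p.1) : ℝ) : ℂ)
    else if p.1 = p.2 ∧ q.1 = q.2 ∧ p.1 ≠ q.1 then -1
    else 0

/-- The class-I witness `W_I(θ)`. -/
noncomputable def WI (θ : ℝ) : Matrix (Fin 4 × Fin 4) (Fin 4 × Fin 4) ℂ :=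
  Wabcd ((2 - Real.sin θ) / 2) ((1 + Real.cos θ) / 2)
        (2 - (2 - Real.sin θ) / 2) (1 - (1 + Real.cos θ) / 2)

/-- The class-II witness `W_II(θ)`. -/
noncomputable def WII (θ : ℝ) : Matrix (Fin 4 × Fin 4) (Fin 4 × Fin 4) ℂ :=
  Wabcd ((1 + Real.cos θ) / 2) ((2 - Real.sin θ) / 2)
        (1 - (1 + Real.cos θ) / 2) (2 - (2 - Real.sin θ) / 2)

/-- The maximally entangled vector `Ψ(j,j') = (−1)^{j+1}/2` if `j = j'`, else `0`. -/
noncomputable def PsiVec : Fin 4 × Fin 4 → ℂ :=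
  fun p => if p.1 = p.2 then ((-1 : ℂ) ^ ((p.1 : ℕ) + 1)) / 2 else 0

/-- The rank-one projector `P = |Ψ⟩⟨Ψ|`. -/
noncomputable def Pmat : Matrix (Fin 4 × Fin 4) (Fin 4 × Fin 4) ℂ :=
  fun u v => PsiVec u * star (PsiVec v)

noncomputable def wph : Fin 4 → ℂ := ![1, Complex.I, -1, -Complex.I]

noncomputable def pse (k m : Fin 4) (a b : ℂ) : Fin 4 → ℂ :=
  fun ℓ => if ℓ = k then a else if ℓ = m then b else 1

noncomputable def Ev (p : Fin 4 × Fin 4) : Fin 4 × Fin 4 → ℂ :=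
  fun q => if q = p then 1 else 0

noncomputable def Sset (s c : ℝ) : Set (Fin 4 × Fin 4 → ℂ) :=
  {v : Fin 4 × Fin 4 → ℂ |
      ∃ ψ : Fin 4 → ℂ, (∀ ℓ, ‖ψ ℓ‖ = 1) ∧ v = tensorVec ψ (star ∘ ψ)} ∪
    {tensorVec ![(s : ℂ), (c : ℂ), 0, 0] ![(c : ℂ), (s : ℂ), 0, 0],
     tensorVec ![0, (s : ℂ), (c : ℂ), 0] ![0, (c : ℂ), (s : ℂ), 0],
     tensorVec ![0, 0, (s : ℂ), (c : ℂ)] ![0, 0, (c : ℂ), (s : ℂ)]}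

noncomputable def phiF : (Fin 4 × Fin 4 → ℂ) →ₗ[ℂ] ℂ where
  toFun v := v (0,0) - v (1,1) + v (2,2) - v (3,3)
  map_add' := by intros; simp; ring
  map_smul' := by intros; simp; ring

lemma wph_abs : ∀ j, ‖wph j‖ = 1 := by
  intro j; fin_cases j <;> simp [wph]

lemma fourierE (k m : Fin 4) (hkm : k ≠ m) :
    Ev (k, m) = (16 : ℂ)⁻¹ •
      ∑ j : Fin 4 × Fin 4, (star (wph j.1) * wph j.2) •
        tensorVec (pse k m (wph j.1) (wph j.2)) (star ∘ pse k m (wph j.1) (wph j.2)) := by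
  funext p
  simp only [Ev, Pi.smul_apply, Finset.sum_apply, Fintype.sum_prod_type,
    tensorVec, pse, Function.comp, smul_eq_mul, Prod.ext_iff]
  by_cases h1 : p.1 = k <;> by_cases h2 : p.1 = m <;>
    by_cases h3 : p.2 = k <;> by_cases h4 : p.2 = m <;>
    simp [h1, h2, h3, h4, hkm, hkm.symm, Fin.sum_univ_four, wph, Complex.ext_iff] <;>
    ring_nf <;> exact ⟨trivial, trivial⟩

lemma Ev_mem (s c : ℝ) (k m : Fin 4) (hkm : k ≠ m) :
    Ev (k, m) ∈ Submodule.span ℂ (Sset s c) := by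
  rw [fourierE k m hkm]
  refine Submodule.smul_mem _ _ (Submodule.sum_mem _ fun j _ => Submodule.smul_mem _ _ ?_)
  refine Submodule.subset_span (Or.inl ⟨pse k m (wph j.1) (wph j.2), fun ℓ => ?_, rfl⟩)
  by_cases h1 : ℓ = k <;> by_cases h2 : ℓ = m <;> simp [pse, h1, h2, hkm.symm, wph_abs]

lemma D1_mem (s c : ℝ) (hs : 0 < s) (hc : 0 < c) :
    Ev (0,0) + Ev (1,1) ∈ Submodule.span ℂ (Sset s c) := by
  have hs' : (s : ℂ) ≠ 0 := by exact_mod_cast hs.ne'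
  have hc' : (c : ℂ) ≠ 0 := by exact_mod_cast hc.ne'
  have h1 : Ev (0,0) + Ev (1,1) = ((s:ℂ)*c)⁻¹ •
      (tensorVec ![(s : ℂ), (c : ℂ), 0, 0] ![(c : ℂ), (s : ℂ), 0, 0]
        - ((s:ℂ)*s) • Ev (0,1) - ((c:ℂ)*c) • Ev (1,0)) := by
    funext p
    obtain ⟨p1, p2⟩ := p
    fin_cases p1 <;> fin_cases p2 <;>
      simp [Ev, tensorVec, Prod.ext_iff] <;> (field_simp [hs', hc']; try ring)
  rw [h1]
  exact Submodule.smul_mem _ _ (Submodule.sub_mem _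
    (Submodule.sub_mem _ (Submodule.subset_span (Or.inr (by left; rfl)))
      (Submodule.smul_mem _ _ (Ev_mem s c 0 1 (by decide))))
    (Submodule.smul_mem _ _ (Ev_mem s c 1 0 (by decide))))

lemma D2_mem (s c : ℝ) (hs : 0 < s) (hc : 0 < c) :
    Ev (1,1) + Ev (2,2) ∈ Submodule.span ℂ (Sset s c) := by
  have hs' : (s : ℂ) ≠ 0 := by exact_mod_cast hs.ne'
  have hc' : (c : ℂ) ≠ 0 := by exact_mod_cast hc.ne'
  have h1 : Ev (1,1) + Ev (2,2) = ((s:ℂ)*c)⁻¹ •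
      (tensorVec ![0, (s : ℂ), (c : ℂ), 0] ![0, (c : ℂ), (s : ℂ), 0]
        - ((s:ℂ)*s) • Ev (1,2) - ((c:ℂ)*c) • Ev (2,1)) := by
    funext p
    obtain ⟨p1, p2⟩ := p
    fin_cases p1 <;> fin_cases p2 <;>
      simp [Ev, tensorVec, Prod.ext_iff] <;> (field_simp [hs', hc']; try ring)
  rw [h1]
  exact Submodule.smul_mem _ _ (Submodule.sub_mem _
    (Submodule.sub_mem _ (Submodule.subset_span (Or.inr (by right; left; rfl)))
      (Submodule.smul_mem _ _ (Ev_mem s c 1 2 (by decide))))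
    (Submodule.smul_mem _ _ (Ev_mem s c 2 1 (by decide))))

lemma D3_mem (s c : ℝ) (hs : 0 < s) (hc : 0 < c) :
    Ev (2,2) + Ev (3,3) ∈ Submodule.span ℂ (Sset s c) := by
  have hs' : (s : ℂ) ≠ 0 := by exact_mod_cast hs.ne'
  have hc' : (c : ℂ) ≠ 0 := by exact_mod_cast hc.ne'
  have h1 : Ev (2,2) + Ev (3,3) = ((s:ℂ)*c)⁻¹ •
      (tensorVec ![0, 0, (s : ℂ), (c : ℂ)] ![0, 0, (c : ℂ), (s : ℂ)]
        - ((s:ℂ)*s) • Ev (2,3) - ((c:ℂ)*c) • Ev (3,2)) := by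
    funext p
    obtain ⟨p1, p2⟩ := p
    fin_cases p1 <;> fin_cases p2 <;>
      simp [Ev, tensorVec, Prod.ext_iff] <;> (field_simp [hs', hc']; try ring)
  rw [h1]
  exact Submodule.smul_mem _ _ (Submodule.sub_mem _
    (Submodule.sub_mem _ (Submodule.subset_span (Or.inr (by right; right; rfl)))
      (Submodule.smul_mem _ _ (Ev_mem s c 2 3 (by decide))))
    (Submodule.smul_mem _ _ (Ev_mem s c 3 2 (by decide))))

lemma ker_le_span (s c : ℝ) (hs : 0 < s) (hc : 0 < c) :
    LinearMap.ker phiF ≤ Submodule.span ℂ (Sset s c) := by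
  intro v hv
  have hv' : v (0,0) - v (1,1) + v (2,2) - v (3,3) = 0 := hv
  have hrep : v =
      v (0,1) • Ev (0,1) + v (0,2) • Ev (0,2) + v (0,3) • Ev (0,3)
    + v (1,0) • Ev (1,0) + v (1,2) • Ev (1,2) + v (1,3) • Ev (1,3)
    + v (2,0) • Ev (2,0) + v (2,1) • Ev (2,1) + v (2,3) • Ev (2,3)
    + v (3,0) • Ev (3,0) + v (3,1) • Ev (3,1) + v (3,2) • Ev (3,2)
    + v (0,0) • (Ev (0,0) + Ev (1,1))
    + (v (1,1) - v (0,0)) • (Ev (1,1) + Ev (2,2))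
    + v (3,3) • (Ev (2,2) + Ev (3,3)) := by
    funext p
    obtain ⟨p1, p2⟩ := p
    fin_cases p1 <;> fin_cases p2 <;>
      simp (config := { decide := true }) [Ev, Prod.ext_iff] <;> linear_combination hv'
  rw [hrep]
  have hE := Ev_mem s c
  refine Submodule.add_mem _ (Submodule.add_mem _ ?_ ?_) ?_
  · refine Submodule.add_mem _ ?_ ?_
    · repeat'
        refine Submodule.add_mem _ ?_ ?_
      all_goals exact Submodule.smul_mem _ _ (hE _ _ (by decide))
    · exact Submodule.smul_mem _ _ (D1_mem s c hs hc)
  · exact Submodule.smul_mem _ _ (D2_mem s c hs hc)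
  · exact Submodule.smul_mem _ _ (D3_mem s c hs hc)

lemma span_le_ker (s c : ℝ) :
    Submodule.span ℂ (Sset s c) ≤ LinearMap.ker phiF := by
  rw [Submodule.span_le]
  rintro v (⟨ψ, hψ, rfl⟩ | hv)
  · have h : ∀ ℓ, ψ ℓ * (starRingEnd ℂ) (ψ ℓ) = 1 := by
      intro ℓ
      rw [Complex.mul_conj]
      norm_cast
      rw [Complex.normSq_eq_norm_sq, hψ ℓ]
      norm_num
    simp only [SetLike.mem_coe, LinearMap.mem_ker]
    show tensorVec ψ (star ∘ ψ) (0,0) - _ + _ - _ = 0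
    simp only [tensorVec, Function.comp]
    show ψ 0 * (starRingEnd ℂ) (ψ 0) - ψ 1 * (starRingEnd ℂ) (ψ 1)
      + ψ 2 * (starRingEnd ℂ) (ψ 2) - ψ 3 * (starRingEnd ℂ) (ψ 3) = 0
    simp [h]
  · simp only [Set.mem_insert_iff, Set.mem_singleton_iff] at hv
    rcases hv with rfl | rfl | rfl <;>
      · simp only [SetLike.mem_coe, LinearMap.mem_ker]
        show tensorVec _ _ (0,0) - _ + _ - _ = 0
        simp [tensorVec]
        ring

lemma span_eq_ker (s c : ℝ) (hs : 0 < s) (hc : 0 < c) :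
    Submodule.span ℂ (Sset s c) = LinearMap.ker phiF :=
  le_antisymm (span_le_ker s c) (ker_le_span s c hs hc)

lemma finrank_ker : Module.finrank ℂ (LinearMap.ker phiF) = 15 := by
  have hsurj : Function.Surjective phiF := by
    intro z
    refine ⟨fun q => if q = (0,0) then z else 0, ?_⟩
    show (if ((0:Fin 4),(0:Fin 4)) = (0,0) then z else 0) - _ + _ - _ = z
    simp (config := { decide := true })
  have h1 : Module.finrank ℂ (LinearMap.range phiF) = 1 := by
    rw [LinearMap.range_eq_top.mpr hsurj]
    simp
  have h2 := LinearMap.finrank_range_add_finrank_ker phiF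
  rw [h1] at h2
  have h3 : Module.finrank ℂ (Fin 4 × Fin 4 → ℂ) = 16 := by
    simp [Module.finrank_fintype_fun_eq_card]
  omega

lemma main_aux (s c : ℝ) (hs : 0 < s) (hc : 0 < c) :
    Module.finrank ℂ (Submodule.span ℂ (Sset s c)) = 15 := by
  rw [span_eq_ker s c hs hc]; exact finrank_ker

theorem span_zero_vectors_dim_15 (θ : ℝ) (hθ : θ ∈ Set.Ioo 0 π) :
    letI s : ℝ := Real.sqrt (Real.sin (θ / 2))
    letI c : ℝ := Real.sqrt (Real.cos (θ / 2))
    Module.finrank ℂ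
      (Submodule.span ℂ
        ({v : Fin 4 × Fin 4 → ℂ |
            ∃ ψ : Fin 4 → ℂ, (∀ ℓ, ‖ψ ℓ‖ = 1) ∧ v = tensorVec ψ (star ∘ ψ)} ∪
          {tensorVec ![(s : ℂ), (c : ℂ), 0, 0] ![(c : ℂ), (s : ℂ), 0, 0],
           tensorVec ![0, (s : ℂ), (c : ℂ), 0] ![0, (c : ℂ), (s : ℂ), 0],
           tensorVec ![0, 0, (s : ℂ), (c : ℂ)] ![0, 0, (c : ℂ), (s : ℂ)]}))
      = 15 := by
  have h1 := hθ.1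
  have h2 := hθ.2
  have hs : 0 < Real.sqrt (Real.sin (θ / 2)) :=
    Real.sqrt_pos.mpr (Real.sin_pos_of_pos_of_lt_pi (by linarith) (by linarith [Real.pi_pos]))
  have hc : 0 < Real.sqrt (Real.cos (θ / 2)) :=
    Real.sqrt_pos.mpr (Real.cos_pos_of_mem_Ioo ⟨by linarith [Real.pi_pos], by linarith⟩)
  exact main_aux _ _ hs hc
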